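/- A positive n×n matrix A = (a_{ij}) maps every nonnegative nonincreasing vector to a nonincreasing vector if and only if for each k = 1,...,n and each i = 1,...,n-1 one has ∑_{j=1}^k a_{i,j} ≥ ∑_{j=1}^k a_{i+1,j}. -/

import Mathlib

open Finset

private lemma abel_id (a x : ℕ → ℝ) : ∀ n : ℕ,
    ∑ j ∈ range n, a j * x j =
      (∑ k ∈ range n, (∑ j ∈ range (k+1), a j) * (x k - x (k+1)))
        + (∑ j ∈ range n, a j) * x n := by
  intro n
  induction n with
  | zero => simp
  | succ n ih =>
    rw [sum_range_succ, ih,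
      sum_range_succ (f := fun k => (∑ j ∈ range (k+1), a j) * (x k - x (k+1))),
      sum_range_succ (f := a)]
    ring

private lemma abel_ineq (n : ℕ) (a b x : ℕ → ℝ)
    (hx0 : ∀ k, 0 ≤ x k) (hx : ∀ k, x (k+1) ≤ x k)
    (hS : ∀ k < n, ∑ j ∈ range (k+1), b j ≤ ∑ j ∈ range (k+1), a j) :
    ∑ j ∈ range n, b j * x j ≤ ∑ j ∈ range n, a j * x j := by
  rw [abel_id b x n, abel_id a x n]
  apply add_le_add
  · apply Finset.sum_le_sum
    intro k hk
    exact mul_le_mul_of_nonneg_right (hS k (mem_range.1 hk)) (sub_nonneg.2 (hx k))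
  · cases n with
    | zero => simp
    | succ m =>
        exact mul_le_mul_of_nonneg_right (hS m (Nat.lt_succ_self m)) (hx0 _)

/-- A positive n×n matrix maps every nonnegative nonincreasing vector to a
nonincreasing vector iff its partial row sums are nonincreasing in the row index. -/
theorem positive_matrix_monotone_iff {n : ℕ} (A : Matrix (Fin n) (Fin n) ℝ)
    (hpos : ∀ i j, 0 ≤ A i j) :
    (∀ x : Fin n → ℝ, (∀ i, 0 ≤ x i) → (∀ i j : Fin n, i ≤ j → x j ≤ x i) →
      ∀ i j : Fin n, i ≤ j → A.mulVec x j ≤ A.mulVec x i)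
    ↔ (∀ k : Fin n, ∀ i : Fin n, ∀ hi : (i : ℕ) + 1 < n,
        ∑ j ∈ Finset.Iic k, A ⟨(i : ℕ) + 1, hi⟩ j ≤ ∑ j ∈ Finset.Iic k, A i j) := by
  constructor
  · intro H k i hi
    set x : Fin n → ℝ := fun j => if j ≤ k then (1:ℝ) else 0 with hxdef
    have hx0 : ∀ j, 0 ≤ x j := by
      intro j; simp only [hxdef]; split <;> norm_num
    have hmono : ∀ i j : Fin n, i ≤ j → x j ≤ x i := by
      intro a b hab
      simp only [hxdef]
      by_cases hb : b ≤ k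
      · rw [if_pos hb, if_pos (hab.trans hb)]
      · rw [if_neg hb]; split <;> norm_num
    have key := H x hx0 hmono i ⟨(i:ℕ)+1, hi⟩ (by simp [Fin.le_def])
    have hIicf : Finset.Iic k = univ.filter (· ≤ k) := by ext j; simp
    have hmv : ∀ r : Fin n, A.mulVec x r = ∑ j ∈ Finset.Iic k, A r j := by
      intro r
      rw [hIicf, Finset.sum_filter]
      simp only [Matrix.mulVec, dotProduct, hxdef, mul_ite, mul_one, mul_zero]
    rw [hmv, hmv] at key
    exact key
  · intro hS x hx0 hmono i j hij
    set aN : Fin n → ℕ → ℝ := fun r m => if h : m < n then A r ⟨m, h⟩ else 0 with haN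
    set xN : ℕ → ℝ := fun m => if h : m < n then x ⟨m, h⟩ else 0 with hxN
    have hmv : ∀ r : Fin n, A.mulVec x r = ∑ m ∈ range n, aN r m * xN m := by
      intro r
      simp only [Matrix.mulVec, dotProduct]
      rw [← Fin.sum_univ_eq_sum_range (fun m => aN r m * xN m) n]
      apply Finset.sum_congr rfl
      intro t _
      simp [haN, hxN, t.isLt]
    have hxN0 : ∀ m, 0 ≤ xN m := by
      intro m; simp only [hxN]; split
      · exact hx0 _
      · exact le_refl 0
    have hxNmono : ∀ m, xN (m+1) ≤ xN m := by
      intro m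
      simp only [hxN]
      by_cases h1 : m + 1 < n
      · rw [dif_pos h1, dif_pos (Nat.lt_of_succ_lt h1)]
        exact hmono _ _ (by simp [Fin.le_def])
      · rw [dif_neg h1]; split
        · exact hx0 _
        · exact le_refl 0
    have hIic : ∀ (r : Fin n) (k : Fin n),
        ∑ j ∈ Finset.Iic k, A r j = ∑ m ∈ range ((k:ℕ)+1), aN r m := by
      intro r k
      have h1 : Finset.range ((k:ℕ)+1) = Finset.Iic (k:ℕ) := by
        ext m; simp [Nat.lt_succ_iff]
      rw [h1, ← Fin.map_valEmbedding_Iic, Finset.sum_map]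
      apply Finset.sum_congr rfl
      intro t _
      simp [haN, t.isLt]
    -- adjacent rows
    have adj : ∀ (m : ℕ) (h : m + 1 < n),
        A.mulVec x ⟨m+1, h⟩ ≤ A.mulVec x ⟨m, Nat.lt_of_succ_lt h⟩ := by
      intro m h
      rw [hmv, hmv]
      apply abel_ineq n _ _ _ hxN0 hxNmono
      intro k hk
      have := hS ⟨k, hk⟩ ⟨m, Nat.lt_of_succ_lt h⟩ h
      rw [hIic, hIic] at this
      exact this
    have chain : ∀ (m : ℕ) (hm : m < n), (i:ℕ) ≤ m → A.mulVec x ⟨m, hm⟩ ≤ A.mulVec x i := by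
      intro m
      induction m with
      | zero =>
          intro hm him
          have : i = ⟨0, hm⟩ := Fin.ext (Nat.le_zero.1 him)
          rw [this]
      | succ m ih =>
          intro hm him
          rcases Nat.lt_or_ge (i:ℕ) (m+1) with h | h
          · exact (adj m hm).trans (ih (Nat.lt_of_succ_lt hm) (Nat.lt_succ_iff.1 h))
          · have : i = ⟨m+1, hm⟩ := Fin.ext (le_antisymm him h)
            rw [this]
    have := chain (j:ℕ) j.isLt hij
    simpa using this
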